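/- Let F be a field of characteristic not 2 and let a1,a2,a3 be non-null points with coordinate vectors vi=(xi,yi,zi), whose pairwise joins are non-null lines. With quadrances q1,q2,q3, spreads S1,S2,S3 (S1 the spread between lines a1a2 and a1a3, etc.), and quadrea A = -det(v1,v2,v3)^2/∏(xi^2+yi^2-zi^2), one has q2*q3*S1 = q1*q3*S2 = q1*q2*S3 = A; in particular S1/q1 = S2/q2 = S3/q3 whenever q1,q2,q3 are nonzero. -/

import Mathlib

private lemma quadrea_case1 {F : Type*} [Field F] (d1 d2 d3 p12 p13 p23 : F)
    (h1 : d1 ≠ 0) (h2 : d2 ≠ 0) (h3 : d3 ≠ 0)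
    (hn2 : p13^2 - d1*d3 ≠ 0) (hn3 : p12^2 - d1*d2 ≠ 0) :
    (1 - p13^2/(d1*d3)) * (1 - p12^2/(d1*d2)) *
      (1 - (p23*d1 - p12*p13)^2 / ((p13^2 - d1*d3) * (p12^2 - d1*d2)))
    = (d1*d2*d3 + 2*p12*p13*p23 - d1*p23^2 - d2*p13^2 - d3*p12^2) / (d1*d2*d3) := by
  field_simp
  ring

private lemma quadrea_case2 {F : Type*} [Field F] (d1 d2 d3 p12 p13 p23 : F)
    (h1 : d1 ≠ 0) (h2 : d2 ≠ 0) (h3 : d3 ≠ 0)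
    (hn1 : p23^2 - d2*d3 ≠ 0) (hn3 : p12^2 - d1*d2 ≠ 0) :
    (1 - p23^2/(d2*d3)) * (1 - p12^2/(d1*d2)) *
      (1 - (p13*d2 - p12*p23)^2 / ((p23^2 - d2*d3) * (p12^2 - d1*d2)))
    = (d1*d2*d3 + 2*p12*p13*p23 - d1*p23^2 - d2*p13^2 - d3*p12^2) / (d1*d2*d3) := by
  have hn3' : p12^2 - d2*d1 ≠ 0 := by rwa [mul_comm d2 d1]
  field_simp
  ring

private lemma quadrea_case3 {F : Type*} [Field F] (d1 d2 d3 p12 p13 p23 : F)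
    (h1 : d1 ≠ 0) (h2 : d2 ≠ 0) (h3 : d3 ≠ 0)
    (hn1 : p23^2 - d2*d3 ≠ 0) (hn2 : p13^2 - d1*d3 ≠ 0) :
    (1 - p23^2/(d2*d3)) * (1 - p13^2/(d1*d3)) *
      (1 - (p12*d3 - p13*p23)^2 / ((p23^2 - d2*d3) * (p13^2 - d1*d3)))
    = (d1*d2*d3 + 2*p12*p13*p23 - d1*p23^2 - d2*p13^2 - d3*p12^2) / (d1*d2*d3) := by
  have hn2' : p13^2 - d3*d1 ≠ 0 := by rwa [mul_comm d3 d1]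
  field_simp
  ring

/-- Quadrea theorem and Spread law: q2 q3 S1 = q1 q3 S2 = q1 q2 S3 = A, hence
    S1/q1 = S2/q2 = S3/q3 when the quadrances are nonzero. -/
theorem quadrea_and_spread_law {F : Type*} [Field F] (hchar : (2 : F) ≠ 0)
    (x1 y1 z1 x2 y2 z2 x3 y3 z3 : F)
    (h1 : x1^2 + y1^2 - z1^2 ≠ 0) (h2 : x2^2 + y2^2 - z2^2 ≠ 0) (h3 : x3^2 + y3^2 - z3^2 ≠ 0)
    -- coordinates of the three joins (hyperbolic cross products)
    (l1 m1 n1 l2 m2 n2 l3 m3 n3 : F)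
    (hL1 : l1 = y2*z3 - y3*z2 ∧ m1 = z2*x3 - z3*x2 ∧ n1 = x3*y2 - x2*y3)
    (hL2 : l2 = y3*z1 - y1*z3 ∧ m2 = z3*x1 - z1*x3 ∧ n2 = x1*y3 - x3*y1)
    (hL3 : l3 = y1*z2 - y2*z1 ∧ m3 = z1*x2 - z2*x1 ∧ n3 = x2*y1 - x1*y2)
    -- the joins are non-null lines
    (hn1 : l1^2 + m1^2 - n1^2 ≠ 0) (hn2 : l2^2 + m2^2 - n2^2 ≠ 0) (hn3 : l3^2 + m3^2 - n3^2 ≠ 0)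
    (q1 q2 q3 S1 S2 S3 A : F)
    (hq1 : q1 = 1 - (x2*x3 + y2*y3 - z2*z3)^2 / ((x2^2 + y2^2 - z2^2) * (x3^2 + y3^2 - z3^2)))
    (hq2 : q2 = 1 - (x1*x3 + y1*y3 - z1*z3)^2 / ((x1^2 + y1^2 - z1^2) * (x3^2 + y3^2 - z3^2)))
    (hq3 : q3 = 1 - (x1*x2 + y1*y2 - z1*z2)^2 / ((x1^2 + y1^2 - z1^2) * (x2^2 + y2^2 - z2^2)))
    (hS1 : S1 = 1 - (l2*l3 + m2*m3 - n2*n3)^2 / ((l2^2 + m2^2 - n2^2) * (l3^2 + m3^2 - n3^2)))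
    (hS2 : S2 = 1 - (l1*l3 + m1*m3 - n1*n3)^2 / ((l1^2 + m1^2 - n1^2) * (l3^2 + m3^2 - n3^2)))
    (hS3 : S3 = 1 - (l1*l2 + m1*m2 - n1*n2)^2 / ((l1^2 + m1^2 - n1^2) * (l2^2 + m2^2 - n2^2)))
    (hA : A = -(x1*y2*z3 - x1*y3*z2 + x2*y3*z1 - x3*y2*z1 + x3*y1*z2 - x2*y1*z3)^2 /
      ((x1^2 + y1^2 - z1^2) * (x2^2 + y2^2 - z2^2) * (x3^2 + y3^2 - z3^2))) :
    q2*q3*S1 = A ∧ q1*q3*S2 = A ∧ q1*q2*S3 = A ∧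
      (q1 ≠ 0 → q2 ≠ 0 → q3 ≠ 0 → S1/q1 = S2/q2 ∧ S2/q2 = S3/q3) := by
  obtain ⟨e1, e2, e3⟩ := hL1
  obtain ⟨e4, e5, e6⟩ := hL2
  obtain ⟨e7, e8, e9⟩ := hL3
  -- norms of the cross products
  have hN1 : l1^2 + m1^2 - n1^2
      = (x2*x3 + y2*y3 - z2*z3)^2 - (x2^2 + y2^2 - z2^2) * (x3^2 + y3^2 - z3^2) := by
    rw [e1, e2, e3]; ring
  have hN2 : l2^2 + m2^2 - n2^2
      = (x1*x3 + y1*y3 - z1*z3)^2 - (x1^2 + y1^2 - z1^2) * (x3^2 + y3^2 - z3^2) := by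
    rw [e4, e5, e6]; ring
  have hN3 : l3^2 + m3^2 - n3^2
      = (x1*x2 + y1*y2 - z1*z2)^2 - (x1^2 + y1^2 - z1^2) * (x2^2 + y2^2 - z2^2) := by
    rw [e7, e8, e9]; ring
  -- inner products of the cross products
  have hI1 : l2*l3 + m2*m3 - n2*n3
      = (x2*x3 + y2*y3 - z2*z3) * (x1^2 + y1^2 - z1^2)
        - (x1*x2 + y1*y2 - z1*z2) * (x1*x3 + y1*y3 - z1*z3) := by
    rw [e4, e5, e6, e7, e8, e9]; ring
  have hI2 : l1*l3 + m1*m3 - n1*n3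
      = (x1*x3 + y1*y3 - z1*z3) * (x2^2 + y2^2 - z2^2)
        - (x1*x2 + y1*y2 - z1*z2) * (x2*x3 + y2*y3 - z2*z3) := by
    rw [e1, e2, e3, e7, e8, e9]; ring
  have hI3 : l1*l2 + m1*m2 - n1*n2
      = (x1*x2 + y1*y2 - z1*z2) * (x3^2 + y3^2 - z3^2)
        - (x1*x3 + y1*y3 - z1*z3) * (x2*x3 + y2*y3 - z2*z3) := by
    rw [e1, e2, e3, e4, e5, e6]; ring
  have hn1' : (x2*x3 + y2*y3 - z2*z3)^2 - (x2^2 + y2^2 - z2^2) * (x3^2 + y3^2 - z3^2) ≠ 0 :=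
    hN1 ▸ hn1
  have hn2' : (x1*x3 + y1*y3 - z1*z3)^2 - (x1^2 + y1^2 - z1^2) * (x3^2 + y3^2 - z3^2) ≠ 0 :=
    hN2 ▸ hn2
  have hn3' : (x1*x2 + y1*y2 - z1*z2)^2 - (x1^2 + y1^2 - z1^2) * (x2^2 + y2^2 - z2^2) ≠ 0 :=
    hN3 ▸ hn3
  -- the Gram determinant identity
  have hG : ((x1^2+y1^2-z1^2)*(x2^2+y2^2-z2^2)*(x3^2+y3^2-z3^2)
        + 2*(x1*x2+y1*y2-z1*z2)*(x1*x3+y1*y3-z1*z3)*(x2*x3+y2*y3-z2*z3)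
        - (x1^2+y1^2-z1^2)*(x2*x3+y2*y3-z2*z3)^2
        - (x2^2+y2^2-z2^2)*(x1*x3+y1*y3-z1*z3)^2
        - (x3^2+y3^2-z3^2)*(x1*x2+y1*y2-z1*z2)^2)
      = -(x1*y2*z3 - x1*y3*z2 + x2*y3*z1 - x3*y2*z1 + x3*y1*z2 - x2*y1*z3)^2 := by
    ring
  have c1 : q2*q3*S1 = A := by
    rw [hq2, hq3, hS1, hN2, hN3, hI1, hA,
      quadrea_case1 _ _ _ _ _ _ h1 h2 h3 hn2' hn3', hG]
  have c2 : q1*q3*S2 = A := by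
    rw [hq1, hq3, hS2, hN1, hN3, hI2, hA,
      quadrea_case2 _ _ _ _ _ _ h1 h2 h3 hn1' hn3', hG]
  have c3 : q1*q2*S3 = A := by
    rw [hq1, hq2, hS3, hN1, hN2, hI3, hA,
      quadrea_case3 _ _ _ _ _ _ h1 h2 h3 hn1' hn2', hG]
  refine ⟨c1, c2, c3, fun hq1 hq2 hq3 => ?_⟩
  constructor
  · rw [div_eq_div_iff hq1 hq2]
    have h := c1.trans c2.symm
    exact mul_left_cancel₀ hq3 (by linear_combination h)
  · rw [div_eq_div_iff hq2 hq3]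
    have h := c2.trans c3.symm
    exact mul_left_cancel₀ hq1 (by linear_combination h)
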